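/- For every s ∈ (0,1), ∫₀¹ g(s,t)² / m(t) dt = −[ s² log s + (1−s)² log(1−s) + m(s) ], which is the function h_wls(s) appearing in the limit covariance kernel for the heteroscedasticity-weighted least squares version of the test. -/

import Mathlib

/-- `m(s) = s(1-s)`. -/
noncomputable def m (s : ℝ) : ℝ := s * (1 - s)

/-- `g(s,t) = min(s,t)·(1 - max(s,t))`. -/
noncomputable def g (s t : ℝ) : ℝ := min s t * (1 - max s t)

/-- For every `s ∈ (0,1)`,
`∫₀¹ g(s,t)²/m(t) dt = -[s² log s + (1-s)² log(1-s) + m(s)]`. -/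
theorem stmt4 (s : ℝ) (hs : s ∈ Set.Ioo (0 : ℝ) 1) :
    ∫ t in (0 : ℝ)..1, (g s t) ^ 2 / m t
      = -(s ^ 2 * Real.log s + (1 - s) ^ 2 * Real.log (1 - s) + m s) := by
  obtain ⟨hs0, hs1⟩ := hs
  have hs0' : (0:ℝ) ≤ s := hs0.le
  have hs1' : s ≤ 1 := hs1.le
  -- equality of integrand with nice functions on each subinterval
  have eq1 : ∀ t ∈ Set.uIcc (0:ℝ) s, g s t ^ 2 / m t = (1 - s) ^ 2 * (t / (1 - t)) := by
    intro t ht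
    rw [Set.uIcc_of_le hs0'] at ht
    obtain ⟨ht0, hts⟩ := ht
    have hmin : min s t = t := min_eq_right hts
    have hmax : max s t = s := max_eq_left hts
    simp only [g, m, hmin, hmax]
    rcases eq_or_lt_of_le ht0 with h | h
    · simp [← h]
    · have h1t : (1:ℝ) - t ≠ 0 := by nlinarith
      field_simp
  have eq2 : ∀ t ∈ Set.uIcc s 1, g s t ^ 2 / m t = s ^ 2 * ((1 - t) / t) := by
    intro t ht
    rw [Set.uIcc_of_le hs1'] at ht
    obtain ⟨hts, ht1⟩ := ht
    have hmin : min s t = s := min_eq_left hts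
    have hmax : max s t = t := max_eq_right hts
    simp only [g, m, hmin, hmax]
    rcases eq_or_lt_of_le ht1 with h | h
    · simp [h]
    · have ht0 : t ≠ 0 := by nlinarith
      have h1t : (1:ℝ) - t ≠ 0 := by nlinarith
      field_simp
  -- FTC on [0, s]
  have h1 : ∫ t in (0:ℝ)..s, (1 - s) ^ 2 * (t / (1 - t))
      = (1 - s) ^ 2 * (-Real.log (1 - s) - s) := by
    have := intervalIntegral.integral_eq_sub_of_hasDerivAt
      (f := fun t => (1 - s) ^ 2 * (-Real.log (1 - t) - t))
      (f' := fun t => (1 - s) ^ 2 * (t / (1 - t))) (a := 0) (b := s)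
      (fun t ht => by
        rw [Set.uIcc_of_le hs0'] at ht
        have h1t : (1:ℝ) - t ≠ 0 := by nlinarith [ht.2]
        have hd : HasDerivAt (fun t : ℝ => -Real.log (1 - t) - t)
            (-((1 - t)⁻¹ * (-1)) - 1) t := by
          have hl : HasDerivAt (fun t : ℝ => Real.log (1 - t)) ((1 - t)⁻¹ * (-1)) t := by
            have : HasDerivAt (fun t : ℝ => 1 - t) (-1) t := by
              simpa using (hasDerivAt_id t).const_sub 1
            exact (Real.hasDerivAt_log h1t).comp t this
          exact hl.neg.sub (hasDerivAt_id' t)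
        have := hd.const_mul ((1 - s) ^ 2)
        convert this using 1
        · rfl
        field_simp
        ring)
      (by
        apply ContinuousOn.intervalIntegrable
        apply ContinuousOn.mul continuousOn_const
        apply ContinuousOn.div continuousOn_id (continuousOn_const.sub continuousOn_id)
        intro t ht
        simp only [Pi.sub_apply, id_eq]
        rw [Set.uIcc_of_le hs0'] at ht
        nlinarith [ht.2])
    rw [this]
    simp
  -- FTC on [s, 1]
  have h2 : ∫ t in s..(1:ℝ), s ^ 2 * ((1 - t) / t)
      = s ^ 2 * (-Real.log s - (1 - s)) := by
    have := intervalIntegral.integral_eq_sub_of_hasDerivAt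
      (f := fun t => s ^ 2 * (Real.log t - t))
      (f' := fun t => s ^ 2 * ((1 - t) / t)) (a := s) (b := 1)
      (fun t ht => by
        rw [Set.uIcc_of_le hs1'] at ht
        have ht0 : t ≠ 0 := by nlinarith [ht.1]
        have hd : HasDerivAt (fun t : ℝ => Real.log t - t) (t⁻¹ - 1) t :=
          (Real.hasDerivAt_log ht0).sub (hasDerivAt_id t)
        have := hd.const_mul (s ^ 2)
        convert this using 1
        · rfl
        field_simp)
      (by
        apply ContinuousOn.intervalIntegrable
        apply ContinuousOn.mul continuousOn_const
        apply ContinuousOn.div (continuousOn_const.sub continuousOn_id) continuousOn_id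
        intro t ht
        simp only [Pi.sub_apply, id_eq]
        rw [Set.uIcc_of_le hs1'] at ht
        nlinarith [ht.1])
    rw [this]
    simp [Real.log_one]
    ring
  -- integrability of original integrand on each piece
  have int1 : IntervalIntegrable (fun t => g s t ^ 2 / m t) MeasureTheory.volume 0 s := by
    apply ContinuousOn.intervalIntegrable
    apply ContinuousOn.congr (f := fun t => (1 - s) ^ 2 * (t / (1 - t)))
    · apply ContinuousOn.mul continuousOn_const
      apply ContinuousOn.div continuousOn_id (continuousOn_const.sub continuousOn_id)
      intro t ht
      simp only [Pi.sub_apply, id_eq]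
      rw [Set.uIcc_of_le hs0'] at ht
      nlinarith [ht.2]
    · intro t ht
      exact eq1 t ht
  have int2 : IntervalIntegrable (fun t => g s t ^ 2 / m t) MeasureTheory.volume s 1 := by
    apply ContinuousOn.intervalIntegrable
    apply ContinuousOn.congr (f := fun t => s ^ 2 * ((1 - t) / t))
    · apply ContinuousOn.mul continuousOn_const
      apply ContinuousOn.div (continuousOn_const.sub continuousOn_id) continuousOn_id
      intro t ht
      simp only [Pi.sub_apply, id_eq]
      rw [Set.uIcc_of_le hs1'] at ht
      nlinarith [ht.1]
    · intro t ht
      exact eq2 t ht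
  rw [← intervalIntegral.integral_add_adjacent_intervals int1 int2,
    intervalIntegral.integral_congr eq1, intervalIntegral.integral_congr eq2, h1, h2]
  simp only [m]
  ring
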